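/- arXiv:1309.4513 — 8 statements merged into one kernel-verified Lean document; each statement's English description precedes it below -/
import Mathlib

section
/- Let pi_11, pi_10, P_d, P_fa be reals with 0 < pi_10 < pi_11 < 1, 0 < P_fa < P_d < 1, pi_11/pi_10 < P_d/P_fa, and 1 + (pi_11 - pi_10) > (P_fa/P_d)*(pi_11/pi_10). Then (1 - pi_11)/(1 - pi_10) + (P_d/P_fa)*log(pi_11/pi_10) > pi_11/pi_10 + (P_d/P_fa)*log((1 - pi_11)/(1 - pi_10)). -/
theorem stmt_2 (π11 π10 Pd Pfa : ℝ)
    (h10 : 0 < π10) (h1110 : π10 < π11) (h11 : π11 < 1)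
    (hfa : 0 < Pfa) (hdfa : Pfa < Pd) (hd : Pd < 1)
    (hratio : π11 / π10 < Pd / Pfa)
    (hkey : 1 + (π11 - π10) > (Pfa / Pd) * (π11 / π10)) :
    (1 - π11) / (1 - π10) + (Pd / Pfa) * Real.log (π11 / π10) >
      π11 / π10 + (Pd / Pfa) * Real.log ((1 - π11) / (1 - π10)) := by
  set a := π11 / π10 with ha
  set b := (1 - π11) / (1 - π10) with hb
  set R := Pd / Pfa with hR
  have ha1 : 1 < a := (one_lt_div h10).2 h1110
  have ha0 : 0 < a := by linarith
  have hb0 : 0 < b := div_pos (by linarith) (by linarith)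
  have hb1 : b < 1 := (div_lt_one (by linarith)).2 (by linarith)
  have hainv : a⁻¹ * a = 1 := inv_mul_cancel₀ (ne_of_gt ha0)
  have hla : -Real.log a < a⁻¹ - 1 := by
    have h := Real.log_lt_sub_one_of_pos (inv_pos.2 ha0)
      (by simp [ne_of_gt ha1])
    rwa [Real.log_inv] at h
  have hlb : Real.log b < b - 1 := Real.log_lt_sub_one_of_pos hb0 (ne_of_lt hb1)
  have hlapos : 0 < Real.log a := Real.log_pos ha1
  have hlbneg : Real.log b < 0 := Real.log_neg hb0 hb1
  nlinarith [mul_pos (sub_pos.2 hratio) (by linarith : (0:ℝ) < Real.log a - Real.log b),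
    mul_lt_mul_of_pos_left hla ha0,
    mul_lt_mul_of_pos_left hlb ha0,
    mul_pos (sub_pos.2 ha1) (sub_pos.2 hb1)]
end

section
/- Let pi_11, pi_10, P_d, P_fa be reals with 0 < pi_10 < pi_11 < 1, 0 < P_fa < P_d < 1, and (1 - pi_11)/(1 - pi_10) > ((1 - P_d)/(1 - P_fa)) * (1 - (pi_11 - pi_10)). Then pi_11/pi_10 + ((1-P_d)/(1-P_fa))*log((1-pi_11)/(1-pi_10)) > (1-pi_11)/(1-pi_10) + ((1-P_d)/(1-P_fa))*log(pi_11/pi_10). -/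
theorem stmt_3 (π11 π10 Pd Pfa : ℝ)
    (h10 : 0 < π10) (h1110 : π10 < π11) (h11 : π11 < 1)
    (hfa : 0 < Pfa) (hdfa : Pfa < Pd) (hd : Pd < 1)
    (hkey : (1 - π11) / (1 - π10) > ((1 - Pd) / (1 - Pfa)) * (1 - (π11 - π10))) :
    π11 / π10 + ((1 - Pd) / (1 - Pfa)) * Real.log ((1 - π11) / (1 - π10)) >
      (1 - π11) / (1 - π10) + ((1 - Pd) / (1 - Pfa)) * Real.log (π11 / π10) := by
  have h10' : 0 < 1 - π10 := by linarith
  have h11' : 0 < 1 - π11 := by linarith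
  have hfa' : 0 < 1 - Pfa := by linarith
  have hd' : 0 < 1 - Pd := by linarith
  have hr : 0 < (1 - Pd) / (1 - Pfa) := by positivity
  have hA : Real.log (π11 / π10) ≤ π11 / π10 - 1 :=
    Real.log_le_sub_one_of_pos (div_pos (by linarith) h10)
  have hB : -Real.log ((1 - π11) / (1 - π10)) ≤ (1 - π10) / (1 - π11) - 1 := by
    rw [← Real.log_inv, inv_div]
    exact Real.log_le_sub_one_of_pos (by positivity)
  have hkey' : (1 - Pd) * (1 - (π11 - π10)) * (1 - π10) < (1 - π11) * (1 - Pfa) := by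
    rw [gt_iff_lt, div_mul_eq_mul_div, div_lt_div_iff₀ hfa' h10'] at hkey
    linarith
  have hmain : ((1 - Pd) / (1 - Pfa)) * ((π11 / π10 - 1) + ((1 - π10) / (1 - π11) - 1)) <
      π11 / π10 - (1 - π11) / (1 - π10) := by
    rw [div_mul_eq_mul_div, div_lt_iff₀ hfa']
    have hd0 : 0 < π11 - π10 := by linarith
    have key2 := mul_lt_mul_of_pos_left hkey' hd0
    field_simp
    nlinarith [key2, mul_pos h10 h11', mul_pos h10' h11']
  have hlog : ((1 - Pd) / (1 - Pfa)) *
      (Real.log (π11 / π10) - Real.log ((1 - π11) / (1 - π10))) ≤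
      ((1 - Pd) / (1 - Pfa)) * ((π11 / π10 - 1) + ((1 - π10) / (1 - π11) - 1)) := by
    apply mul_le_mul_of_nonneg_left _ hr.le
    linarith
  have := mul_sub ((1 - Pd) / (1 - Pfa)) (Real.log (π11 / π10))
      (Real.log ((1 - π11) / (1 - π10)))
  linarith
end

section
/- Let t, p, P_d, P_fa be reals with 0 <= t < 1/2, 0 < P_fa < 1/2 < P_d < 1, and 0 <= p <= 1. Define pi_11 = t*p*(1 - 2*P_d) + P_d and pi_10 = t*p*(1 - 2*P_fa) + P_fa, and assume 0 < pi_10 < pi_11 < 1. Then (1 - 2*P_fa)*((1 - pi_11)/(1 - pi_10) - pi_11/pi_10) + (1 - 2*P_d)*log(((1 - pi_10)/(1 - pi_11))*(pi_11/pi_10)) < 0. -/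
theorem stmt_4 (t p Pd Pfa : ℝ)
    (ht0 : 0 ≤ t) (ht : t < 1/2)
    (hfa : 0 < Pfa) (hfa2 : Pfa < 1/2) (hd2 : 1/2 < Pd) (hd : Pd < 1)
    (hp0 : 0 ≤ p) (hp1 : p ≤ 1)
    (π11 π10 : ℝ)
    (hπ11 : π11 = t * p * (1 - 2 * Pd) + Pd)
    (hπ10 : π10 = t * p * (1 - 2 * Pfa) + Pfa)
    (h10 : 0 < π10) (h1110 : π10 < π11) (h11 : π11 < 1) :
    (1 - 2 * Pfa) * ((1 - π11) / (1 - π10) - π11 / π10) +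
      (1 - 2 * Pd) * Real.log (((1 - π10) / (1 - π11)) * (π11 / π10)) < 0 := by
  have ha : 0 < 1 - 2 * Pfa := by linarith
  have hb : 1 - 2 * Pd < 0 := by linarith
  have h1m10 : 0 < 1 - π10 := by linarith
  have h1m11 : 0 < 1 - π11 := by linarith
  have hA : (1 - π11) / (1 - π10) < 1 := (div_lt_one h1m10).2 (by linarith)
  have hB : 1 < π11 / π10 := (one_lt_div h10).2 h1110
  have hC : 1 < (1 - π10) / (1 - π11) := (one_lt_div h1m11).2 (by linarith)
  have harg : 1 < ((1 - π10) / (1 - π11)) * (π11 / π10) := by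
    calc (1:ℝ) = 1 * 1 := by ring
    _ < ((1 - π10) / (1 - π11)) * (π11 / π10) :=
      mul_lt_mul'' hC hB (by norm_num) (by norm_num)
  have hlog : 0 < Real.log (((1 - π10) / (1 - π11)) * (π11 / π10)) :=
    Real.log_pos harg
  have t1 : (1 - 2 * Pfa) * ((1 - π11) / (1 - π10) - π11 / π10) < 0 :=
    mul_neg_of_pos_of_neg ha (by linarith)
  have t2 : (1 - 2 * Pd) * Real.log (((1 - π10) / (1 - π11)) * (π11 / π10)) < 0 :=
    mul_neg_of_neg_of_pos hb hlog
  linarith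
end

section
/- Let t be a real with 0 <= t < 1/2, and let P_d, P_fa satisfy 0 < P_fa < P_d < 1. With pi_11(t) = t*(1 - 2*P_d) + P_d, pi_10(t) = t*(1 - 2*P_fa) + P_fa, and D(t) the binary KL divergence between (pi_11(t), 1 - pi_11(t)) and (pi_10(t), 1 - pi_10(t)), the function D is strictly decreasing on [0, 1/2). -/
lemma stmt_7_aux_key (a b p q : ℝ) (hq0 : 0 < q) (hqp : q < p) (hp1 : p < 1)
    (hab : a < b) (h1 : a * q < b * p) (h2 : a * (1 - q) < b * (1 - p)) :
    a * (Real.log (p / q) - Real.log ((1 - p) / (1 - q)))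
      - b * (p / q - (1 - p) / (1 - q)) < 0 := by
  have hp0 : 0 < p := hq0.trans hqp
  have h1p : 0 < 1 - p := by linarith
  have h1q : 0 < 1 - q := by linarith
  set L1 := Real.log (p / q) with hL1
  set L2 := Real.log ((1 - p) / (1 - q)) with hL2
  have hA : L1 * q ≤ p - q := by
    have h := mul_le_mul_of_nonneg_right
      (Real.log_le_sub_one_of_pos (div_pos hp0 hq0)) hq0.le
    rw [sub_mul, div_mul_cancel₀ _ hq0.ne'] at h
    linarith
  have hB : p - q ≤ L1 * p := by
    have h := mul_le_mul_of_nonneg_right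
      (Real.log_le_sub_one_of_pos (div_pos hq0 hp0)) hp0.le
    rw [sub_mul, div_mul_cancel₀ _ hp0.ne'] at h
    have hneg : Real.log (q / p) = -L1 := by
      rw [hL1, ← Real.log_inv, inv_div]
    rw [hneg] at h
    linarith
  have hC : L2 * (1 - q) ≤ q - p := by
    have h := mul_le_mul_of_nonneg_right
      (Real.log_le_sub_one_of_pos (div_pos h1p h1q)) h1q.le
    rw [sub_mul, div_mul_cancel₀ _ h1q.ne'] at h
    linarith
  have hD : q - p ≤ L2 * (1 - p) := by
    have h := mul_le_mul_of_nonneg_right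
      (Real.log_le_sub_one_of_pos (div_pos h1q h1p)) h1p.le
    rw [sub_mul, div_mul_cancel₀ _ h1p.ne'] at h
    have hneg : Real.log ((1 - q) / (1 - p)) = -L2 := by
      rw [hL2, ← Real.log_inv, inv_div]
    rw [hneg] at h
    linarith
  have hM : p / q - (1 - p) / (1 - q) = (p - q) / (q * (1 - q)) := by
    field_simp; ring
  rw [hM, sub_neg, mul_div_assoc', lt_div_iff₀ (by positivity : (0:ℝ) < q * (1 - q))]
  rcases le_or_gt 0 a with ha | ha
  · have hb : 0 < b := lt_of_le_of_lt ha hab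
    nlinarith [mul_le_mul_of_nonneg_left hA (mul_nonneg (mul_nonneg ha h1q.le) h1p.le),
      mul_le_mul_of_nonneg_left hD (mul_nonneg (mul_nonneg ha hq0.le) h1q.le),
      mul_pos (mul_pos hq0 h1q) h1p, mul_pos (sub_pos.mpr hqp) h1p,
      mul_lt_mul_of_pos_right h2 (mul_pos (sub_pos.mpr hqp) (by linarith : (0:ℝ) < 1 - p + q)),
      mul_pos hb (mul_pos (sub_pos.mpr hqp) h1p)]
  · have hsum : (p - q) * (1 - q + p) ≤ p * (1 - q) * (L1 - L2) := by
      nlinarith [mul_le_mul_of_nonneg_right hB h1q.le,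
        mul_le_mul_of_nonneg_right hC hp0.le]
    have hint1 : a * q * (p * (1 - q) * (L1 - L2)) ≤ a * q * ((p - q) * (1 - q + p)) :=
      mul_le_mul_of_nonpos_left hsum (by nlinarith)
    nlinarith [mul_pos hq0 (sub_pos.mpr hqp), mul_lt_mul_of_pos_right h1 (sub_pos.mpr hqp),
      mul_pos hp0 (sub_pos.mpr hqp),
      mul_neg_of_neg_of_pos ha (mul_pos hq0 (mul_pos (sub_pos.mpr hqp) (sub_pos.mpr hqp)))]

lemma stmt_7_aux_deriv (Pd Pfa : ℝ)
    (hfa : 0 < Pfa) (hdfa : Pfa < Pd) (hd : Pd < 1) :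
    ∀ t ∈ Set.Ico (0 : ℝ) (1/2),
    HasDerivAt (fun t : ℝ =>
      (t * (1 - 2 * Pd) + Pd) *
          Real.log ((t * (1 - 2 * Pd) + Pd) / (t * (1 - 2 * Pfa) + Pfa)) +
        (1 - (t * (1 - 2 * Pd) + Pd)) *
          Real.log ((1 - (t * (1 - 2 * Pd) + Pd)) / (1 - (t * (1 - 2 * Pfa) + Pfa))))
      ((1 - 2*Pd) * (Real.log ((t * (1 - 2 * Pd) + Pd) / (t * (1 - 2 * Pfa) + Pfa))
          - Real.log ((1 - (t * (1 - 2 * Pd) + Pd)) / (1 - (t * (1 - 2 * Pfa) + Pfa))))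
        - (1 - 2*Pfa) * ((t * (1 - 2 * Pd) + Pd) / (t * (1 - 2 * Pfa) + Pfa)
          - (1 - (t * (1 - 2 * Pd) + Pd)) / (1 - (t * (1 - 2 * Pfa) + Pfa)))) t := by
  intro t ht
  obtain ⟨ht0, ht2⟩ := ht
  set p := t * (1 - 2 * Pd) + Pd with hpdef
  set q := t * (1 - 2 * Pfa) + Pfa with hqdef
  have hq0 : 0 < q := by nlinarith
  have hq1 : q < 1 := by nlinarith
  have hp0 : 0 < p := by nlinarith
  have hp1 : p < 1 := by nlinarith
  have h1p : (0:ℝ) < 1 - p := by linarith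
  have h1q : (0:ℝ) < 1 - q := by linarith
  have hP : HasDerivAt (fun t : ℝ => t * (1 - 2 * Pd) + Pd) (1 - 2*Pd) t := by
    simpa using ((hasDerivAt_id t).mul_const (1 - 2*Pd)).add_const Pd
  have hQ : HasDerivAt (fun t : ℝ => t * (1 - 2 * Pfa) + Pfa) (1 - 2*Pfa) t := by
    simpa using ((hasDerivAt_id t).mul_const (1 - 2*Pfa)).add_const Pfa
  have h1P : HasDerivAt (fun t : ℝ => 1 - (t * (1 - 2 * Pd) + Pd)) (-(1 - 2*Pd)) t :=
    hP.const_sub 1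
  have h1Q : HasDerivAt (fun t : ℝ => 1 - (t * (1 - 2 * Pfa) + Pfa)) (-(1 - 2*Pfa)) t :=
    hQ.const_sub 1
  have hlog1 := ((hP.div hQ hq0.ne').log (div_ne_zero hp0.ne' hq0.ne'))
  have hlog2 := ((h1P.div h1Q h1q.ne').log (div_ne_zero h1p.ne' h1q.ne'))
  have hmain := (hP.mul hlog1).add (h1P.mul hlog2)
  refine hmain.congr_deriv ?_
  simp only [Pi.div_apply, ← hpdef, ← hqdef]
  field_simp
  ring

theorem stmt_7 (Pd Pfa : ℝ)
    (hfa : 0 < Pfa) (hdfa : Pfa < Pd) (hd : Pd < 1) :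
    StrictAntiOn (fun t : ℝ =>
      (t * (1 - 2 * Pd) + Pd) *
          Real.log ((t * (1 - 2 * Pd) + Pd) / (t * (1 - 2 * Pfa) + Pfa)) +
        (1 - (t * (1 - 2 * Pd) + Pd)) *
          Real.log ((1 - (t * (1 - 2 * Pd) + Pd)) / (1 - (t * (1 - 2 * Pfa) + Pfa))))
      (Set.Ico (0 : ℝ) (1/2)) := by
  have hderiv := stmt_7_aux_deriv Pd Pfa hfa hdfa hd
  apply strictAntiOn_of_deriv_neg (convex_Ico _ _)
  · exact fun x hx => (hderiv x hx).continuousAt.continuousWithinAt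
  · intro x hx
    rw [interior_Ico] at hx
    obtain ⟨hx0, hx2⟩ := hx
    have hxmem : x ∈ Set.Ico (0:ℝ) (1/2) := ⟨hx0.le, hx2⟩
    rw [(hderiv x hxmem).deriv]
    set p := x * (1 - 2 * Pd) + Pd with hpdef
    set q := x * (1 - 2 * Pfa) + Pfa with hqdef
    have hq0 : 0 < q := by nlinarith
    have hqp : q < p := by nlinarith
    have hp1 : p < 1 := by nlinarith
    exact stmt_7_aux_key (1 - 2*Pd) (1 - 2*Pfa) p q hq0 hqp hp1
      (by linarith) (by nlinarith) (by nlinarith)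
end

section
/- For integers a >= 2, K >= 1, and 1 <= k <= K, (a+1)^(K+1) * (a^(K-k+1) - 1) - a^(K+1) * ((a+1)^(K-k+1) - 1) >= 0. -/
private lemma aux_L (a : ℕ) (ha : 2 ≤ a) : ∀ j, 2 ≤ j →
    ((a : ℤ) + 1) ^ j * ((a : ℤ) - 1) ≥ (a : ℤ) ^ (j + 1) := by
  intro j hj
  induction j with
  | zero => omega
  | succ n ih =>
    rcases Nat.lt_or_ge n 2 with hn | hn
    · interval_cases n
      · omega
      · have haz : (2 : ℤ) ≤ (a : ℤ) := by exact_mod_cast ha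
        have e : ((a:ℤ)+1)^(1+1) * ((a:ℤ)-1) - (a:ℤ)^(1+1+1) = (a:ℤ)^2 - (a:ℤ) - 1 := by ring
        nlinarith [sq_nonneg ((a:ℤ) - 2)]
    · have h := ih (by omega)
      have haz : (2 : ℤ) ≤ (a : ℤ) := by exact_mod_cast ha
      have hpow : (0 : ℤ) ≤ (a : ℤ) ^ (n + 1) := by positivity
      calc ((a : ℤ) + 1) ^ (n + 1) * ((a : ℤ) - 1)
          = ((a : ℤ) + 1) * (((a : ℤ) + 1) ^ n * ((a : ℤ) - 1)) := by ring
        _ ≥ ((a : ℤ) + 1) * (a : ℤ) ^ (n + 1) := by nlinarith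
        _ ≥ (a : ℤ) ^ (n + 1 + 1) := by
            have e : ((a:ℤ))^(n+1+1) = (a:ℤ)^(n+1) * (a:ℤ) := by ring
            rw [e]; nlinarith

private lemma aux_P (a K : ℕ) (ha : 2 ≤ a) : ∀ m, m ≤ K →
    ((a : ℤ) + 1) ^ (K + 1) * ((a : ℤ) ^ m - 1) -
      (a : ℤ) ^ (K + 1) * (((a : ℤ) + 1) ^ m - 1) ≥ 0 := by
  intro m
  induction m with
  | zero => intro _; simp
  | succ n ih =>
    intro hm
    have h1 := ih (by omega)
    obtain ⟨j, rfl⟩ : ∃ j, K = n + 1 + j := ⟨K - (n + 1), by omega⟩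
    have h2 := aux_L a ha (j + 2) (by omega)
    have hA : (0 : ℤ) ≤ (a : ℤ) ^ n := by positivity
    have hB : (0 : ℤ) ≤ ((a : ℤ) + 1) ^ n := by positivity
    have hprod : (0 : ℤ) ≤ (a : ℤ) ^ n * ((a : ℤ) + 1) ^ n *
        (((a : ℤ) + 1) ^ (j + 2) * ((a : ℤ) - 1) - (a : ℤ) ^ (j + 2) * (a : ℤ)) := by
      apply mul_nonneg (mul_nonneg hA hB)
      have : (a : ℤ) ^ (j + 2) * (a : ℤ) = (a : ℤ) ^ (j + 2 + 1) := by ring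
      linarith [this ▸ h2]
    have key : ((a : ℤ) + 1) ^ (n + 1 + j + 1) * ((a : ℤ) ^ (n + 1) - 1) -
        (a : ℤ) ^ (n + 1 + j + 1) * (((a : ℤ) + 1) ^ (n + 1) - 1)
        = (((a : ℤ) + 1) ^ (n + 1 + j + 1) * ((a : ℤ) ^ n - 1) -
          (a : ℤ) ^ (n + 1 + j + 1) * (((a : ℤ) + 1) ^ n - 1)) +
          (a : ℤ) ^ n * ((a : ℤ) + 1) ^ n *
          (((a : ℤ) + 1) ^ (j + 2) * ((a : ℤ) - 1) - (a : ℤ) ^ (j + 2) * (a : ℤ)) := by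
      have e1 : ((a : ℤ) + 1) ^ (n + 1 + j + 1) = ((a : ℤ) + 1) ^ n * ((a : ℤ) + 1) ^ (j + 2) := by
        rw [← pow_add]; ring_nf
      have e2 : ((a : ℤ)) ^ (n + 1 + j + 1) = ((a : ℤ)) ^ n * ((a : ℤ)) ^ (j + 2) := by
        rw [← pow_add]; ring_nf
      rw [e1, e2]; ring
    linarith [key ▸ (by linarith : (0:ℤ) ≤ (((a : ℤ) + 1) ^ (n + 1 + j + 1) * ((a : ℤ) ^ n - 1) -
          (a : ℤ) ^ (n + 1 + j + 1) * (((a : ℤ) + 1) ^ n - 1)) +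
          (a : ℤ) ^ n * ((a : ℤ) + 1) ^ n *
          (((a : ℤ) + 1) ^ (j + 2) * ((a : ℤ) - 1) - (a : ℤ) ^ (j + 2) * (a : ℤ)))]

theorem stmt_11 (a K k : ℕ) (ha : 2 ≤ a) (hK : 1 ≤ K) (hk1 : 1 ≤ k) (hkK : k ≤ K) :
    ((a : ℤ) + 1) ^ (K + 1) * ((a : ℤ) ^ (K - k + 1) - 1) -
      (a : ℤ) ^ (K + 1) * (((a : ℤ) + 1) ^ (K - k + 1) - 1) ≥ 0 := by
  exact aux_P a K ha (K - k + 1) (by omega)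
end

section
/- For integers a >= 3, K >= 1, and 1 <= k <= K, (a*(a-1))^(K-k+1) * (a^k - (a-1)^k) >= a^(K+1) - (a-1)^(K+1). -/
lemma aux1 (b : ℤ) (hb : 3 ≤ b) : ∀ m : ℕ, 1 ≤ m → b ^ (m+1) * (b - 2) ≥ (b - 1) ^ (m+2) := by
  intro m hm
  induction m with
  | zero => omega
  | succ n ih =>
    rcases Nat.eq_or_lt_of_le hm with h | h
    · have : n = 0 := by omega
      subst this
      ring_nf
      nlinarith [sq_nonneg b, sq_nonneg (b-1)]
    · have hn : 1 ≤ n := by omega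
      have h1 := ih hn
      have hb1 : (0:ℤ) ≤ (b-1)^(n+2) := pow_nonneg (by linarith) _
      calc (b-1)^(n+1+2) = (b-1) * (b-1)^(n+2) := by ring
        _ ≤ b * (b-1)^(n+2) := by nlinarith
        _ ≤ b * (b^(n+1) * (b-2)) := by nlinarith
        _ = b^(n+1+1) * (b-2) := by ring

lemma aux2 (b : ℤ) (hb : 3 ≤ b) (m : ℕ) (hm : 1 ≤ m) :
    b * (b - 1) * (b ^ m - (b - 1) ^ m) ≥ b ^ (m+1) - (b - 1) ^ (m+1) := by
  have h1 := aux1 b hb m hm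
  have e1 : b ^ (m+1) = b^m * b := by ring
  have e2 : (b-1) ^ (m+1) = (b-1)^m * (b-1) := by ring
  have e3 : (b-1) ^ (m+2) = (b-1)^m * (b-1) * (b-1) := by ring
  rw [e1, e3] at h1
  rw [e1, e2]
  nlinarith

lemma aux3 (b : ℤ) (hb : 3 ≤ b) (k : ℕ) (hk : 1 ≤ k) :
    ∀ d : ℕ, (b * (b - 1)) ^ d * (b ^ k - (b - 1) ^ k) ≥ b ^ (k+d) - (b - 1) ^ (k+d) := by
  intro d
  induction d with
  | zero => simp
  | succ n ih =>
    have hnn : (0:ℤ) ≤ b * (b-1) := by nlinarith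
    have step := aux2 b hb (k+n) (by omega)
    calc (b*(b-1))^(n+1) * (b^k - (b-1)^k)
        = b*(b-1) * ((b*(b-1))^n * (b^k - (b-1)^k)) := by ring
      _ ≥ b*(b-1) * (b^(k+n) - (b-1)^(k+n)) := by
          exact mul_le_mul_of_nonneg_left ih hnn
      _ ≥ b^(k+n+1) - (b-1)^(k+n+1) := step
      _ = b^(k+(n+1)) - (b-1)^(k+(n+1)) := by ring_nf

theorem stmt_12 (a K k : ℕ) (ha : 3 ≤ a) (hK : 1 ≤ K) (hk1 : 1 ≤ k) (hkK : k ≤ K) :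
    ((a : ℤ) * ((a : ℤ) - 1)) ^ (K - k + 1) * ((a : ℤ) ^ k - ((a : ℤ) - 1) ^ k) ≥
      (a : ℤ) ^ (K + 1) - ((a : ℤ) - 1) ^ (K + 1) := by
  have hb : (3:ℤ) ≤ (a:ℤ) := by exact_mod_cast ha
  have h := aux3 (a:ℤ) hb k hk1 (K - k + 1)
  have he : k + (K - k + 1) = K + 1 := by omega
  rwa [he] at h
end

section
/- For integers a >= 2, K >= 2, and 1 <= k <= K, (a^(K-k+1) - 1) / (a*(a^K - 1)) > ((a+1)^(K-k+1) - 1) / ((a+1)*((a+1)^K - 1)). -/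
open Finset

private lemma pos_term (a b : ℝ) (ha : 0 < a) (hab : a < b) (i l : ℕ) (hil : i < l) :
    b ^ i * a ^ l < a ^ i * b ^ l := by
  have hb : 0 < b := ha.trans hab
  have h1 : a ^ l = a ^ i * a ^ (l - i) := by
    rw [← pow_add]; congr 1; omega
  have h2 : b ^ l = b ^ i * b ^ (l - i) := by
    rw [← pow_add]; congr 1; omega
  have h3 : a ^ (l - i) < b ^ (l - i) :=
    pow_lt_pow_left₀ hab ha.le (by omega)
  rw [h1, h2]
  have hpos : (0 : ℝ) < a ^ i * b ^ i := by positivity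
  calc b ^ i * (a ^ i * a ^ (l - i)) = (a ^ i * b ^ i) * a ^ (l - i) := by ring
    _ < (a ^ i * b ^ i) * b ^ (l - i) := by
        exact mul_lt_mul_of_pos_left h3 hpos
    _ = a ^ i * (b ^ i * b ^ (l - i)) := by ring

private lemma key_sum (a b : ℝ) (ha : 0 < a) (hab : a < b) (m K : ℕ)
    (hm : 1 ≤ m) (hmK : m ≤ K) :
    (∑ i ∈ range m, b ^ i) * (a * ∑ j ∈ range K, a ^ j) <
      (∑ i ∈ range m, a ^ i) * (b * ∑ j ∈ range K, b ^ j) := by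
  have expand : ∀ x y : ℝ, (∑ i ∈ range m, x ^ i) * (y * ∑ j ∈ range K, y ^ j) =
      ∑ p ∈ range m ×ˢ range K, x ^ p.1 * y ^ (p.2 + 1) := by
    intro x y
    rw [Finset.mul_sum, Finset.sum_mul_sum, Finset.sum_product]
    refine Finset.sum_congr rfl fun i _ => Finset.sum_congr rfl fun j _ => by
      rw [pow_succ]; ring
  rw [expand, expand, ← sub_pos, ← Finset.sum_sub_distrib]
  have hPS : Ico 1 m ×ˢ range (m - 1) ⊆ range m ×ˢ range K := by
    rintro ⟨i, j⟩ hp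
    simp only [Finset.mem_product, Finset.mem_Ico, Finset.mem_range] at hp ⊢
    omega
  rw [← Finset.sum_sdiff hPS]
  have hzero : ∑ p ∈ Ico 1 m ×ˢ range (m - 1),
      (a ^ p.1 * b ^ (p.2 + 1) - b ^ p.1 * a ^ (p.2 + 1)) = 0 := by
    apply Finset.sum_involution (fun p _ => (p.2 + 1, p.1 - 1))
    · rintro ⟨i, j⟩ hp
      simp only [Finset.mem_product, Finset.mem_Ico, Finset.mem_range] at hp
      have h1 : i - 1 + 1 = i := by omega
      simp only [h1]
      ring
    · rintro ⟨i, j⟩ hp hfp hc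
      apply hfp
      simp only [Prod.mk.injEq] at hc
      have h1 : j + 1 = i := hc.1
      simp only [← h1]
      ring
    · rintro ⟨i, j⟩ hp
      simp only [Finset.mem_product, Finset.mem_Ico, Finset.mem_range,
        Prod.mk.injEq] at hp ⊢
      omega
    · rintro ⟨i, j⟩ hp
      simp only [Finset.mem_product, Finset.mem_Ico, Finset.mem_range,
        Prod.mk.injEq] at hp ⊢
      omega
  rw [hzero, add_zero]
  apply Finset.sum_pos
  · rintro ⟨i, j⟩ hp
    simp only [Finset.mem_sdiff, Finset.mem_product, Finset.mem_Ico,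
      Finset.mem_range] at hp
    have hil : i < j + 1 := by omega
    have := pos_term a b ha hab i (j + 1) hil
    simp only []
    linarith
  · refine ⟨(0, K - 1), ?_⟩
    simp only [Finset.mem_sdiff, Finset.mem_product, Finset.mem_Ico,
      Finset.mem_range]
    omega

theorem stmt_13 (a K k : ℕ) (ha : 2 ≤ a) (hK : 2 ≤ K) (hk1 : 1 ≤ k) (hkK : k ≤ K) :
    ((a : ℝ) ^ (K - k + 1) - 1) / ((a : ℝ) * ((a : ℝ) ^ K - 1)) >
      (((a : ℝ) + 1) ^ (K - k + 1) - 1) / (((a : ℝ) + 1) * (((a : ℝ) + 1) ^ K - 1)) := by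
  set x : ℝ := (a : ℝ) with hx
  set y : ℝ := (a : ℝ) + 1 with hy
  set m : ℕ := K - k + 1 with hm
  have hx1 : (1 : ℝ) < x := by
    have : (2 : ℝ) ≤ (a : ℝ) := by exact_mod_cast ha
    linarith
  have hxy : x < y := by rw [hy]; linarith [hx]
  have hy1 : (1 : ℝ) < y := hx1.trans hxy
  have hx0 : (0 : ℝ) < x := by linarith
  have hy0 : (0 : ℝ) < y := by linarith
  have hKpos : 0 < K := by omega
  have hxK : (1 : ℝ) < x ^ K := one_lt_pow₀ hx1 (by omega)
  have hyK : (1 : ℝ) < y ^ K := one_lt_pow₀ hy1 (by omega)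
  have hdx : (0 : ℝ) < x * (x ^ K - 1) := mul_pos hx0 (by linarith)
  have hdy : (0 : ℝ) < y * (y ^ K - 1) := mul_pos hy0 (by linarith)
  rw [gt_iff_lt, div_lt_div_iff₀ hdy hdx]
  have hm1 : 1 ≤ m := by omega
  have hmK : m ≤ K := by omega
  have key := key_sum x y hx0 hxy m K hm1 hmK
  have hgx : (∑ i ∈ range m, x ^ i) * (x - 1) = x ^ m - 1 := geom_sum_mul x m
  have hgy : (∑ i ∈ range m, y ^ i) * (y - 1) = y ^ m - 1 := geom_sum_mul y m
  have hgx' : (∑ j ∈ range K, x ^ j) * (x - 1) = x ^ K - 1 := geom_sum_mul x K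
  have hgy' : (∑ j ∈ range K, y ^ j) * (y - 1) = y ^ K - 1 := geom_sum_mul y K
  have hfac : (0 : ℝ) < (x - 1) * (y - 1) := by nlinarith
  calc (y ^ m - 1) * (x * (x ^ K - 1))
      = ((∑ i ∈ range m, y ^ i) * (x * ∑ j ∈ range K, x ^ j)) * ((x - 1) * (y - 1)) := by
        rw [← hgy, ← hgx']; ring
    _ < ((∑ i ∈ range m, x ^ i) * (y * ∑ j ∈ range K, y ^ j)) * ((x - 1) * (y - 1)) :=
        mul_lt_mul_of_pos_right key hfac
    _ = (x ^ m - 1) * (y * (y ^ K - 1)) := by rw [← hgx, ← hgy']; ring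
end

section
/- Let a >= 2, K >= 1 be integers and B_1, ..., B_K nonnegative integers with B_k <= a^k. Define x = sum over k of B_k * (a^(K-k+1) - 1)/(a-1), y = a*(a^K - 1)/(a-1), x1 = sum over k of B_k * a^(K-k+1), y1 = a^(K+1). Then x/y <= x1/y1. -/
theorem stmt_16 (a K : ℕ) (ha : 2 ≤ a) (hK : 1 ≤ K) (B : ℕ → ℕ)
    (hB : ∀ k ∈ Finset.Icc 1 K, B k ≤ a ^ k) :
    (∑ k ∈ Finset.Icc 1 K, (B k : ℝ) * ((a : ℝ) ^ (K - k + 1) - 1) / ((a : ℝ) - 1)) /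
        ((a : ℝ) * ((a : ℝ) ^ K - 1) / ((a : ℝ) - 1)) ≤
      (∑ k ∈ Finset.Icc 1 K, (B k : ℝ) * (a : ℝ) ^ (K - k + 1)) / (a : ℝ) ^ (K + 1) := by
  have ha1 : (1 : ℝ) < (a : ℝ) := by exact_mod_cast lt_of_lt_of_le one_lt_two (by exact_mod_cast ha)
  have hc : (0 : ℝ) < (a : ℝ) - 1 := by linarith
  have ha0 : (0 : ℝ) < (a : ℝ) := by linarith
  have haK : (1 : ℝ) < (a : ℝ) ^ K := one_lt_pow₀ ha1 (by omega)
  have hy : (0 : ℝ) < (a : ℝ) * ((a : ℝ) ^ K - 1) / ((a : ℝ) - 1) :=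
    div_pos (mul_pos ha0 (by linarith)) hc
  have hy1 : (0 : ℝ) < (a : ℝ) ^ (K + 1) := pow_pos ha0 _
  set T : ℝ := ∑ k ∈ Finset.Icc 1 K, (B k : ℝ) * (a : ℝ) ^ (K - k + 1) with hTdef
  set S : ℝ := ∑ k ∈ Finset.Icc 1 K, (B k : ℝ) with hSdef
  have hT0 : 0 ≤ T := Finset.sum_nonneg fun k _ => by positivity
  have hS0 : 0 ≤ S := Finset.sum_nonneg fun k _ => by positivity
  have hsum : (∑ k ∈ Finset.Icc 1 K, (B k : ℝ) * ((a : ℝ) ^ (K - k + 1) - 1) / ((a : ℝ) - 1))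
      = (T - S) / ((a : ℝ) - 1) := by
    rw [← Finset.sum_div, hTdef, hSdef, ← Finset.sum_sub_distrib]
    congr 1
    refine Finset.sum_congr rfl fun k _ => by ring
  have hTS : T ≤ S * (a : ℝ) ^ K := by
    rw [hSdef, Finset.sum_mul]
    refine Finset.sum_le_sum fun k hk => ?_
    have hk' : K - k + 1 ≤ K := by
      simp only [Finset.mem_Icc] at hk; omega
    exact mul_le_mul_of_nonneg_left (pow_le_pow_right₀ (le_of_lt ha1) hk') (by positivity)
  rw [hsum, div_le_div_iff₀ hy hy1]
  have key : (T - S) * (a : ℝ) ^ (K + 1) ≤ T * ((a : ℝ) * ((a : ℝ) ^ K - 1)) := by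
    have hps : (a : ℝ) ^ (K + 1) = (a : ℝ) ^ K * a := pow_succ _ _
    nlinarith [mul_le_mul_of_nonneg_right hTS (le_of_lt ha0)]
  calc (T - S) / ((a : ℝ) - 1) * (a : ℝ) ^ (K + 1)
      = (T - S) * (a : ℝ) ^ (K + 1) / ((a : ℝ) - 1) := by ring
    _ ≤ T * ((a : ℝ) * ((a : ℝ) ^ K - 1)) / ((a : ℝ) - 1) := by
        gcongr
    _ = T * ((a : ℝ) * ((a : ℝ) ^ K - 1) / ((a : ℝ) - 1)) := by ring
end
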